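/- (i) For all g, h ∈ G∖{e}, all x ∈ G and all ψ : G → W: (T_{δ_{xg}}(T_{δ_{xgh}} ψ))(x) = γ_g(γ_h(ψ(xgh))) if both g ∈ C and h ∈ C, and (T_{δ_{xg}}(T_{δ_{xgh}} ψ))(x) = 0 otherwise. (ii) For all y ∈ G, all q ∈ G with q ∉ C and q ≠ e, all x ∈ G and all ψ : G → W: (T_{δ_y}(T_{δ_{yq}} ψ))(x) = −δ_y(x)·Σ_{a,b∈C, ab=q} γ_a(γ_b(ψ(xq))). (These compute, respectively, the Connes representation π_{D̸} on the universal 2-forms e(δ_g)⊗e(δ_h) underlying the Woronowicz relations, and π_{D̸} applied to the differentials of the calculus ideal N_H, in the proof of Theorem 5.4.) -/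

import Mathlib

lemma sum_ite_single_smul {G : Type*} [DecidableEq G] {C : Finset G}
    {W : Type*} [AddCommGroup W] [Module ℂ W]
    (g : G) (v : {x // x ∈ C} → W) :
    ∑ a : {x // x ∈ C}, (if (a : G) = g then (1 : ℂ) else 0) • v a
      = if hg : g ∈ C then v ⟨g, hg⟩ else 0 := by
  split_ifs with hg
  · rw [Fintype.sum_eq_single (⟨g, hg⟩ : {x // x ∈ C})]
    · simp
    · intro b hb
      have : (b : G) ≠ g := fun h => hb (Subtype.ext h)
      simp [this]
  · apply Finset.sum_eq_zero
    intro a _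
    have : (a : G) ≠ g := fun h => hg (h ▸ a.2)
    simp [this]

theorem connes_representation_on_universal_two_forms
    {G : Type*} [Group G] [Fintype G] [DecidableEq G]
    (C : Finset G) (hne : C.Nonempty) (he : (1 : G) ∉ C)
    (hconj : ∀ (g c : G), c ∈ C → g * c * g⁻¹ ∈ C)
    {W : Type*} [AddCommGroup W] [Module ℂ W]
    (γ : {x // x ∈ C} → Module.End ℂ W)
    (T : (G → ℂ) → (G → W) → (G → W))
    (hT : ∀ f ψ x, T f ψ x =
      ∑ a : {x // x ∈ C}, (f (x * a) - f x) • γ a (ψ (x * (a : G))))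
    (δ : G → G → ℂ) (hδ : ∀ y x, δ y x = if x = y then 1 else 0) :
    (∀ (g h : G), g ≠ 1 → h ≠ 1 → ∀ (x : G) (ψ : G → W),
      (∀ (hg : g ∈ C) (hh : h ∈ C),
        T (δ (x * g)) (T (δ (x * g * h)) ψ) x =
          γ ⟨g, hg⟩ (γ ⟨h, hh⟩ (ψ (x * g * h)))) ∧
      (¬(g ∈ C ∧ h ∈ C) → T (δ (x * g)) (T (δ (x * g * h)) ψ) x = 0)) ∧
    (∀ (y q : G), q ∉ C → q ≠ 1 → ∀ (x : G) (ψ : G → W),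
      T (δ y) (T (δ (y * q)) ψ) x =
        -(δ y x • ∑ a : {x // x ∈ C}, ∑ b : {x // x ∈ C},
          if (a : G) * (b : G) = q then γ a (γ b (ψ (x * q))) else 0)) := by
  have ha1 : ∀ a : {x // x ∈ C}, (a : G) ≠ 1 := fun a h => he (h ▸ a.2)
  constructor
  · intro g h hg1 hh1 x ψ
    have step1 : T (δ (x * g)) (T (δ (x * g * h)) ψ) x =
        ∑ a : {x // x ∈ C}, (if (a : G) = g then (1 : ℂ) else 0) •
          γ a (T (δ (x * g * h)) ψ (x * (a : G))) := by
      rw [hT]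
      refine Finset.sum_congr rfl fun a _ => ?_
      congr 1
      simp [hδ, mul_right_inj, left_eq_mul, hg1]
    have step2 : T (δ (x * g * h)) ψ (x * g) =
        if hh : h ∈ C then γ ⟨h, hh⟩ (ψ (x * g * h)) else 0 := by
      have s : T (δ (x * g * h)) ψ (x * g) =
          ∑ b : {x // x ∈ C}, (if (b : G) = h then (1 : ℂ) else 0) •
            γ b (ψ (x * g * (b : G))) := by
        rw [hT]
        refine Finset.sum_congr rfl fun b _ => ?_
        congr 1
        simp [hδ, mul_right_inj, left_eq_mul, hh1]
      rw [s, sum_ite_single_smul h (fun b => γ b (ψ (x * g * (b : G))))]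
    have key : T (δ (x * g)) (T (δ (x * g * h)) ψ) x =
        if hg : g ∈ C then
          γ ⟨g, hg⟩ (if hh : h ∈ C then γ ⟨h, hh⟩ (ψ (x * g * h)) else 0)
        else 0 := by
      rw [step1, sum_ite_single_smul g
        (fun a => γ a (T (δ (x * g * h)) ψ (x * (a : G))))]
      by_cases hg : g ∈ C
      · rw [dif_pos hg, dif_pos hg]
        exact congrArg _ step2
      · rw [dif_neg hg, dif_neg hg]
    constructor
    · intro hg hh
      rw [key, dif_pos hg, dif_pos hh]
    · intro hgh
      rw [key]
      by_cases hg : g ∈ C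
      · have hh : h ∉ C := fun hh => hgh ⟨hg, hh⟩
        rw [dif_pos hg, dif_neg hh, map_zero]
      · rw [dif_neg hg]
  · intro y q hqC hq1 x ψ
    have haq : ∀ a : {x // x ∈ C}, (a : G) ≠ q := fun a h => hqC (h ▸ a.2)
    rw [hT]
    simp only [hT, hδ]
    by_cases hxy : x = y
    · subst hxy
      simp only [if_pos rfl, mul_eq_left, ha1, if_false, zero_sub,
        mul_right_inj, haq, sub_zero, one_smul, if_true, eq_self_iff_true, neg_smul]
      rw [← Finset.sum_neg_distrib]
      refine Finset.sum_congr rfl fun a _ => ?_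
      congr 1
      rw [map_sum]
      refine Finset.sum_congr rfl fun b _ => ?_
      have hcond : x * (a : G) * (b : G) = x * q ↔ (a : G) * (b : G) = q := by
        rw [mul_assoc, mul_right_inj]
      simp only [hcond]
      rw [ite_smul, one_smul, zero_smul, apply_ite (γ a), map_zero]
      split_ifs with hab
      · rw [show x * (a : G) * (b : G) = x * q by rw [mul_assoc, hab]]
      · rfl
    · rw [if_neg hxy, zero_smul, neg_zero]
      apply Finset.sum_eq_zero
      intro a _
      by_cases hay : x * (a : G) = y
      · rw [hay]
        have inner0 : (∑ b : {x // x ∈ C},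
            ((if y * (b : G) = y * q then (1:ℂ) else 0) -
              (if y = y * q then 1 else 0)) • γ b (ψ (y * (b : G)))) = 0 := by
          apply Finset.sum_eq_zero
          intro b _
          simp [mul_right_inj, haq b, left_eq_mul, hq1]
        rw [inner0, map_zero, smul_zero]
      · simp [hay, hxy]
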